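/- For any linear order on {E,D,N} with N < E, the sum of q^{maj(W)} over all Schröder paths from (0,0) to (n,n) with l steps equals (q^{l-n}/[l-n+1]_q) · qbinom(2(l-n), l-n) · qbinom(l, 2n-l). -/

import Mathlib

inductive Step : Type
  | E | D | N
deriving DecidableEq

instance : Fintype Step :=
  ⟨{Step.E, Step.D, Step.N}, fun x => by cases x <;> simp⟩

open Step Polynomial

/-- All words of length `l` over the step alphabet. -/
def Words (l : ℕ) : Finset (List Step) :=
  (Finset.univ : Finset (Fin l → Step)).image List.ofFn

/-- Delannoy paths from (0,0) to (m,n) with `l` steps, encoded as words: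
`#E + #D = m`, `#N + #D = n`, length `l`. -/
def DelSet (m n l : ℕ) : Finset (List Step) :=
  (Words l).filter fun w => w.count E + w.count D = m ∧ w.count N + w.count D = n

/-- A word is bad if some prefix contains more N's than E's. -/
def bad (w : List Step) : Bool :=
  (List.range (w.length + 1)).any fun k => (w.take k).count E < (w.take k).count N

/-- Bad Delannoy paths from (0,0) to (n,n) with `l` steps. -/
def BDelSet (n l : ℕ) : Finset (List Step) :=
  (DelSet n n l).filter fun w => bad w

/-- Schröder paths: Delannoy paths to (n,n) never going above the diagonal. -/
def SchSet (n l : ℕ) : Finset (List Step) :=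
  (DelSet n n l).filter fun w => ¬ bad w

/-- Major index of a word w_1 ⋯ w_l with respect to a ranking of the letters:
the sum of all positions i (1 ≤ i ≤ l-1) with w_i > w_{i+1}. -/
def maj (rank : Step → ℕ) (w : List Step) : ℕ :=
  ∑ i ∈ Finset.range (w.length - 1),
    if rank (w.getD (i + 1) E) < rank (w.getD i E) then i + 1 else 0

/-- q-integer [m] = 1 + q + ⋯ + q^{m-1}. -/
noncomputable def qint (m : ℕ) : Polynomial ℚ :=
  ∑ i ∈ Finset.range m, X ^ i

/-- q-factorial. -/
noncomputable def qfact : ℕ → Polynomial ℚ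
  | 0 => 1
  | m + 1 => qfact m * qint (m + 1)

/-- Gaussian binomial coefficient, via the q-Pascal recurrence. -/
noncomputable def qbinom : ℕ → ℕ → Polynomial ℚ
  | _, 0 => 1
  | 0, _ + 1 => 0
  | m + 1, k + 1 => qbinom m k + X ^ (k + 1) * qbinom m (k + 1)

/-- q-trinomial coefficient [l]!/([a]![b]![c]!), defined when a+b+c = l. -/
noncomputable def qbinom3 (l a b c : ℕ) : Polynomial ℚ :=
  if a + b + c = l then qbinom l a * qbinom (l - a) b else 0

/-- Depth after the first `i` steps: #N − #E. -/
def depth (w : List Step) (i : ℕ) : ℤ :=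
  ((w.take i).count N : ℤ) - (w.take i).count E

/-- `k` (0 ≤ k ≤ l) achieves the maximal running depth. -/
def isMaxDepth (w : List Step) (k : ℕ) : Bool :=
  (List.range (w.length + 1)).all fun i => decide (depth w i ≤ depth w k)

/-- The first index (number of steps) at which the running depth is maximal. -/
def firstDeep (w : List Step) : ℕ :=
  (List.range (w.length + 1)).findIdx (isMaxDepth w)

/-- The last index at which the running depth is maximal. -/
def lastDeep (w : List Step) : ℕ :=
  w.length - (List.range (w.length + 1)).reverse.findIdx (isMaxDepth w)

/-- Replace the first deepest step (the step w_k, k = firstDeep) with E. -/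
def phi (w : List Step) : List Step := w.set (firstDeep w - 1) E

/-- Replace the step following the last deepest point with N. -/
def phiInv (w : List Step) : List Step := w.set (lastDeep w) N

/-- Number of consecutive D's immediately after the first deepest step. -/
def runS (w : List Step) : ℕ := ((w.drop (firstDeep w)).takeWhile (· == D)).length

/-- Number of consecutive D's immediately before the first deepest step. -/
def runR (w : List Step) : ℕ :=
  ((w.take (firstDeep w - 1)).reverse.takeWhile (· == D)).length

/-- The window map: replace W₁ = D^r w_k D^s by D^{r-1} E D^{s+1} if r ≥ 1,
and by D^s E if r = 0. -/
def phiWin (w : List Step) : List Step :=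
  let k := firstDeep w - 1
  let r := runR w
  let s := runS w
  let seg : List Step :=
    if 1 ≤ r then List.replicate (r - 1) D ++ [E] ++ List.replicate (s + 1) D
    else List.replicate s D ++ [E]
  w.take (k - r) ++ seg ++ w.drop (k + s + 1)

/-- 0-based index of the first step after which the path is above the diagonal. -/
def firstAbove (w : List Step) : ℕ :=
  (List.range w.length).findIdx fun i =>
    decide ((w.take (i + 1)).count E < (w.take (i + 1)).count N)

/-- The map ψ of Bonin–Shapiro–Simion: replace with E the last N of the maximal
run of consecutive N's beginning at the first step going above the diagonal. -/
def psi (w : List Step) : List Step :=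
  let i := firstAbove w
  let j := i + ((w.drop i).takeWhile (· == N)).length - 1
  w.set j E

-- ALGEBRA INFRA
lemma qint_mul (m : ℕ) : qint m * (X - 1) = X ^ m - 1 := by
  rw [qint]; exact geom_sum_mul X m

lemma qint_succ (m : ℕ) : qint (m + 1) = qint m + X ^ m := by
  rw [qint, qint, Finset.sum_range_succ]

lemma qint_add (u v : ℕ) : qint (u + v) = qint u + X ^ u * qint v := by
  induction v with
  | zero => simp [qint]
  | succ v ih => rw [← Nat.add_assoc, qint_succ, qint_succ, ih, pow_add]; ring

lemma qint_ne_zero {m : ℕ} (h : 1 ≤ m) : qint m ≠ 0 := by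
  intro h0
  have := congrArg (Polynomial.eval 1) h0
  simp [qint, Polynomial.eval_finset_sum] at this
  omega

lemma qfact_succ (m : ℕ) : qfact (m + 1) = qfact m * qint (m + 1) := rfl

lemma qfact_ne_zero (m : ℕ) : qfact m ≠ 0 := by
  induction m with
  | zero => simp [qfact]
  | succ m ih => exact mul_ne_zero ih (qint_ne_zero (Nat.le_add_left 1 m))

lemma X_sub_one_ne_zero : (X - 1 : Polynomial ℚ) ≠ 0 := by
  simpa using Polynomial.X_sub_C_ne_zero (1 : ℚ)

lemma tri (u v w : ℕ) :
    qint u * qint v * qint w * (X - 1) ^ 3 =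
      (X ^ u - 1) * ((X ^ v - 1) * (X ^ w - 1)) := by
  have hu := qint_mul u
  have hv := qint_mul v
  have hw := qint_mul w
  linear_combination (qint v * qint w * (X - 1) ^ 2) * hu +
    ((X ^ u - 1) * qint w * (X - 1)) * hv + ((X ^ u - 1) * (X ^ v - 1)) * hw

lemma qbinom_eq_zero : ∀ m k, m < k → qbinom m k = 0 := by
  intro m
  induction m with
  | zero => intro k hk; match k, hk with | k+1, _ => rfl
  | succ m ih =>
    intro k hk
    match k, hk with
    | k+1, hk =>
      show qbinom m k + X ^ (k + 1) * qbinom m (k + 1) = 0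
      rw [ih k (by omega), ih (k+1) (by omega)]; ring

lemma qbinom_diag : ∀ n, qbinom n n = 1 := by
  intro n
  induction n with
  | zero => rfl
  | succ n ih =>
    show qbinom n n + X ^ (n + 1) * qbinom n (n + 1) = 1
    rw [ih, qbinom_eq_zero n (n+1) (by omega)]; ring

lemma qbinom_mul : ∀ n u v, u + v = n → qbinom n u * (qfact u * qfact v) = qfact n := by
  intro n
  induction n with
  | zero => intro u v h; obtain ⟨rfl, rfl⟩ : u = 0 ∧ v = 0 := by omega
            simp [qbinom, qfact]
  | succ n ih =>
    intro u v h
    match u with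
    | 0 => obtain rfl : v = n + 1 := by omega
           show 1 * (qfact 0 * qfact (n+1)) = qfact (n+1); simp [qfact]
    | p + 1 =>
      match v with
      | 0 =>
        obtain rfl : p = n := by omega
        show qbinom (p+1) (p+1) * (qfact (p+1) * qfact 0) = qfact (p+1)
        rw [qbinom_diag]; show 1 * (qfact (p+1) * 1) = qfact (p+1); ring
      | q + 1 =>
        have hn : p + q + 1 = n := by omega
        have h1 := ih p (q+1) (by omega)
        have h2 := ih (p+1) q (by omega)
        show (qbinom n p + X ^ (p + 1) * qbinom n (p + 1)) * (qfact (p+1) * qfact (q+1)) = qfact (n+1)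
        have e1 : qfact (p+1) = qfact p * qint (p+1) := rfl
        have e2 : qfact (q+1) = qfact q * qint (q+1) := rfl
        have e3 : qfact (n+1) = qfact n * qint (n+1) := rfl
        have e4 : qint (n+1) = qint (p+1) + X ^ (p+1) * qint (q+1) := by
          rw [← qint_add]; congr 1; omega
        linear_combination qint (p+1) * h1 + X^(p+1) * qint (q+1) * h2 +
          (qbinom n p * qfact (q+1)) * e1 + (X^(p+1) * qbinom n (p+1) * qfact (p+1)) * e2
          - e3 - qfact n * e4

noncomputable def Mq (a b c : ℕ) : Polynomial ℚ := qbinom (a+b+c) a * qbinom (b+c) b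

noncomputable def RMq (a b c : ℕ) : Polynomial ℚ := if 1 ≤ b then Mq (a+1) (b-1) c else 0

lemma Mq_fact (a b c : ℕ) : Mq a b c * (qfact a * (qfact b * qfact c)) = qfact (a+b+c) := by
  have h1 := qbinom_mul (a+b+c) a (b+c) (by omega)
  have h2 := qbinom_mul (b+c) b c rfl
  rw [Mq]
  linear_combination (qbinom (a+b+c) a * qfact a) * h2 + h1

lemma Mq_swap (a b c : ℕ) : Mq a b c = Mq b a c := by
  have h1 := Mq_fact a b c
  have h2 := Mq_fact b a c
  rw [show b+a+c = a+b+c from by omega] at h2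
  have hne : qfact a * (qfact b * qfact c) ≠ 0 :=
    mul_ne_zero (qfact_ne_zero a) (mul_ne_zero (qfact_ne_zero b) (qfact_ne_zero c))
  apply mul_right_cancel₀ hne
  linear_combination h1 - h2

lemma MBgen3 (p q r u v w : ℕ) (FA FB FC : Polynomial ℚ)
    (e : FA * (FB * FC) = (qfact p * (qfact q * qfact r)) * (qint u * (qint v * qint w))) :
    Mq p q r * (FA * FB * FC * (X-1)^3) =
      qfact (p+q+r) * ((X^u - 1) * ((X^v - 1) * (X^w - 1))) := by
  have hM := Mq_fact p q r
  have ht := tri u v w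
  linear_combination (Mq p q r * (X-1)^3) * e +
    (qint u * (qint v * qint w) * (X-1)^3) * hM + qfact (p+q+r) * ht

lemma MBgen2 (p q r v w : ℕ) (FA FB FC : Polynomial ℚ) (h : 1 ≤ p+q+r)
    (e : FA * (FB * FC) = (qfact p * (qfact q * qfact r)) * (qint v * qint w)) :
    Mq p q r * (FA * FB * FC * (X-1)^3) =
      qfact (p+q+r-1) * ((X^(p+q+r) - 1) * ((X^v - 1) * (X^w - 1))) := by
  obtain ⟨L0, hL⟩ : ∃ L0, p+q+r = L0+1 := ⟨p+q+r-1, by omega⟩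
  have hM := Mq_fact p q r
  rw [hL] at hM ⊢
  rw [qfact_succ] at hM
  simp only [Nat.add_sub_cancel]
  have ht := tri (L0+1) v w
  linear_combination (Mq p q r * (X-1)^3) * e +
    (qint v * qint w * (X-1)^3) * hM + qfact L0 * ht

lemma MB0 (a b c : ℕ) (h : 1 ≤ a+b+c) :
    Mq a b c * (qfact (a+2) * qfact b * qfact c * (X-1)^3) =
      qfact (a+b+c-1) * ((X^(a+b+c) - 1) * ((X^(a+1) - 1) * (X^(a+2) - 1))) := by
  apply MBgen2 a b c (a+1) (a+2) _ _ _ h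
  have r : qfact (a+2) = qfact a * qint (a+1) * qint (a+2) := rfl
  rw [r]; ring

lemma MB1 (a b c : ℕ) :
    RMq a b c * (qfact (a+2) * qfact b * qfact c * (X-1)^3) =
      qfact (a+b+c-1) * ((X^(a+b+c) - 1) * ((X^b - 1) * (X^(a+2) - 1))) := by
  rcases b with _ | B
  · simp [RMq]
  · rw [show RMq a (B+1) c = Mq (a+1) B c from by simp [RMq]]
    rw [show a+(B+1)+c = a+1+B+c from by omega]
    apply MBgen2 (a+1) B c (B+1) (a+2) _ _ _ (by omega)
    have r1 : qfact (a+2) = qfact (a+1) * qint (a+2) := rfl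
    have r2 : qfact (B+1) = qfact B * qint (B+1) := rfl
    rw [r1, r2]; ring

lemma MB2 (a b c : ℕ) :
    (if 1 ≤ a then Mq (a-1) b c else 0) * (qfact (a+2) * qfact b * qfact c * (X-1)^3) =
      qfact (a+b+c-1) * ((X^a - 1) * ((X^(a+1) - 1) * (X^(a+2) - 1))) := by
  rcases a with _ | A
  · simp
  · rw [if_pos (by omega : 1 ≤ A+1), Nat.add_sub_cancel,
      show A+1+b+c-1 = A+b+c from by omega]
    apply MBgen3 A b c (A+1) (A+2) (A+3)
    have r : qfact (A+3) = qfact A * qint (A+1) * qint (A+2) * qint (A+3) := rfl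
    rw [r]; ring

lemma MB3 (a b c : ℕ) (h : 1 ≤ a) :
    (if 1 ≤ a then RMq (a-1) b c else 0) * (qfact (a+2) * qfact b * qfact c * (X-1)^3) =
      qfact (a+b+c-1) * ((X^b - 1) * ((X^(a+1) - 1) * (X^(a+2) - 1))) := by
  obtain ⟨A, rfl⟩ : ∃ A, a = A+1 := ⟨a-1, by omega⟩
  rw [if_pos (by omega : 1 ≤ A+1), Nat.add_sub_cancel]
  rcases b with _ | B
  · simp [RMq]
  · rw [show RMq A (B+1) c = Mq (A+1) B c from by simp [RMq],
      show A+1+(B+1)+c-1 = A+1+B+c from by omega]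
    apply MBgen3 (A+1) B c (B+1) (A+2) (A+3)
    have r1 : qfact (A+3) = qfact (A+1) * qint (A+2) * qint (A+3) := rfl
    have r2 : qfact (B+1) = qfact B * qint (B+1) := rfl
    rw [r1, r2]; ring

lemma MB4 (a b c : ℕ) :
    (if 1 ≤ b then Mq a (b-1) c else 0) * (qfact (a+2) * qfact b * qfact c * (X-1)^3) =
      qfact (a+b+c-1) * ((X^b - 1) * ((X^(a+1) - 1) * (X^(a+2) - 1))) := by
  rcases b with _ | B
  · simp
  · rw [if_pos (by omega : 1 ≤ B+1), Nat.add_sub_cancel,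
      show a+(B+1)+c-1 = a+B+c from by omega]
    apply MBgen3 a B c (B+1) (a+1) (a+2)
    have r1 : qfact (a+2) = qfact a * qint (a+1) * qint (a+2) := rfl
    have r2 : qfact (B+1) = qfact B * qint (B+1) := rfl
    rw [r1, r2]; ring

lemma MB5 (a b c : ℕ) :
    (if 1 ≤ b then RMq a (b-1) c else 0) * (qfact (a+2) * qfact b * qfact c * (X-1)^3) =
      qfact (a+b+c-1) * ((X^b - 1) * ((X^(b-1) - 1) * (X^(a+2) - 1))) := by
  rcases b with _ | B
  · simp
  · rw [if_pos (by omega : 1 ≤ B+1), Nat.add_sub_cancel]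
    rcases B with _ | B2
    · simp [RMq]
    · rw [show RMq a (B2+1) c = Mq (a+1) B2 c from by simp [RMq],
        show a+(B2+1+1)+c-1 = a+1+B2+c from by omega]
      apply MBgen3 (a+1) B2 c (B2+1+1) (B2+1) (a+2)
      have r1 : qfact (a+2) = qfact (a+1) * qint (a+2) := rfl
      have r2 : qfact (B2+1+1) = qfact B2 * qint (B2+1) * qint (B2+1+1) := rfl
      rw [r1, r2]; ring

lemma MB6 (a b c : ℕ) :
    (if 1 ≤ c then Mq a b (c-1) else 0) * (qfact (a+2) * qfact b * qfact c * (X-1)^3) =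
      qfact (a+b+c-1) * ((X^c - 1) * ((X^(a+1) - 1) * (X^(a+2) - 1))) := by
  rcases c with _ | C
  · simp
  · rw [if_pos (by omega : 1 ≤ C+1), Nat.add_sub_cancel,
      show a+b+(C+1)-1 = a+b+C from by omega]
    apply MBgen3 a b C (C+1) (a+1) (a+2)
    have r1 : qfact (a+2) = qfact a * qint (a+1) * qint (a+2) := rfl
    have r2 : qfact (C+1) = qfact C * qint (C+1) := rfl
    rw [r1, r2]; ring

lemma MB7 (a b c : ℕ) :
    (if 1 ≤ c then RMq a b (c-1) else 0) * (qfact (a+2) * qfact b * qfact c * (X-1)^3) =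
      qfact (a+b+c-1) * ((X^b - 1) * ((X^c - 1) * (X^(a+2) - 1))) := by
  rcases c with _ | C
  · simp
  · rw [if_pos (by omega : 1 ≤ C+1), Nat.add_sub_cancel]
    rcases b with _ | B
    · simp [RMq]
    · rw [show RMq a (B+1) C = Mq (a+1) B C from by simp [RMq],
        show a+(B+1)+(C+1)-1 = a+1+B+C from by omega]
      apply MBgen3 (a+1) B C (B+1) (C+1) (a+2)
      have r1 : qfact (a+2) = qfact (a+1) * qint (a+2) := rfl
      have r2 : qfact (B+1) = qfact B * qint (B+1) := rfl
      have r3 : qfact (C+1) = qfact C * qint (C+1) := rfl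
      rw [r1, r2, r3]; ring


lemma qbinom_zero (m : ℕ) : qbinom m 0 = 1 := by cases m <;> rfl

lemma Mq_zero (c : ℕ) : Mq 0 0 c = 1 := by
  simp [Mq, qbinom_zero]

lemma Wne (a b c : ℕ) : qfact (a+2) * qfact b * qfact c * (X-1:Polynomial ℚ)^3 ≠ 0 := by
  refine mul_ne_zero (mul_ne_zero (mul_ne_zero (qfact_ne_zero _) (qfact_ne_zero _)) (qfact_ne_zero _)) (pow_ne_zero _ X_sub_one_ne_zero)

lemma stepSum (f : Step → Polynomial ℚ) : (∑ y : Step, f y) = f E + f D + f N := by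
  rw [show (Finset.univ : Finset Step) = {E, D, N} from by decide]
  rw [Finset.sum_insert (by decide), Finset.sum_insert (by decide), Finset.sum_singleton]
  ring

def Gexp (rank : Step → ℕ) (a b c : ℕ) (x : Step) : ℕ :=
  (if rank x < rank E then a else 0) + (if rank x < rank N then b else 0) +
    (if rank x < rank D then c else 0)

def dlt (rank : Step → ℕ) (x : Step) : ℕ :=
  if rank N ≤ rank x ∧ rank x < rank E then 1 else 0

noncomputable def Fml (rank : Step → ℕ) (a b c : ℕ) : Step → Polynomial ℚ
  | E => X ^ Gexp rank (a-1) b c E *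
      ((if 1 ≤ a then Mq (a-1) b c else 0) - X ^ dlt rank E * (if 1 ≤ a then RMq (a-1) b c else 0))
  | N => X ^ Gexp rank a (b-1) c N *
      ((if 1 ≤ b then Mq a (b-1) c else 0) - X ^ dlt rank N * (if 1 ≤ b then RMq a (b-1) c else 0))
  | D => X ^ Gexp rank a b (c-1) D *
      ((if 1 ≤ c then Mq a b (c-1) else 0) - X ^ dlt rank D * (if 1 ≤ c then RMq a b (c-1) else 0))

lemma AlgCore (rank : Step → ℕ) (hinj : Function.Injective rank) (hNE : rank N < rank E)
    (a b c : ℕ) (hba : b ≤ a) (hL : 1 ≤ a+b+c) (x : Step) :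
    (∑ y : Step, X ^ ((a+b+c) * (if rank x < rank y then 1 else 0)) * Fml rank a b c y) =
      X ^ Gexp rank a b c x * (Mq a b c - X ^ dlt rank x * RMq a b c) := by
  have hDN : rank D ≠ rank N := fun h => absurd (hinj h) (by decide)
  have hDE : rank D ≠ rank E := fun h => absurd (hinj h) (by decide)
  rw [stepSum (fun y => X ^ ((a+b+c) * (if rank x < rank y then 1 else 0)) * Fml rank a b c y)]
  rcases Nat.lt_trichotomy (rank D) (rank N) with h1 | h1 | h1
  · -- DNE
    have q1 : (rank Step.E < rank Step.E) = False := eq_false (by omega)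
    have q2 : (rank Step.E < rank Step.N) = False := eq_false (by omega)
    have q3 : (rank Step.E < rank Step.D) = False := eq_false (by omega)
    have q4 : (rank Step.N < rank Step.E) = True := eq_true (by omega)
    have q5 : (rank Step.N < rank Step.N) = False := eq_false (by omega)
    have q6 : (rank Step.N < rank Step.D) = False := eq_false (by omega)
    have q7 : (rank Step.D < rank Step.E) = True := eq_true (by omega)
    have q8 : (rank Step.D < rank Step.N) = True := eq_true (by omega)
    have q9 : (rank Step.D < rank Step.D) = False := eq_false (by omega)
    have q10 : (rank Step.N ≤ rank Step.E) = True := eq_true (by omega)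
    have q11 : (rank Step.N ≤ rank Step.N) = True := eq_true (by omega)
    have q12 : (rank Step.N ≤ rank Step.D) = False := eq_false (by omega)
    rcases x with _ | _ | _
    · simp only [Fml, Gexp, dlt, q1, q2, q3, q4, q5, q6, q7, q8, q9, q10, q11, q12, if_true, if_false, and_true, true_and, and_false, false_and, mul_one, mul_zero, add_zero, zero_add, pow_zero, one_mul]
      rcases a with _ | A
      · obtain rfl : b = 0 := by omega
        obtain ⟨C, rfl⟩ : ∃ C, c = C + 1 := ⟨c-1, by omega⟩
        simp [RMq, Mq_zero]
        try ring
      · rcases b with _ | B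
        · have hh0 := MB0 (A+1) 0 c (by omega)
          have hh1 := MB1 (A+1) 0 c
          have hh2 := MB2 (A+1) 0 c
          have hh3 := MB3 (A+1) 0 c (by omega)
          have hh4 := MB4 (A+1) 0 c
          have hh5 := MB5 (A+1) 0 c
          have hh6 := MB6 (A+1) 0 c
          have hh7 := MB7 (A+1) 0 c
          refine mul_right_cancel₀ (Wne (A+1) 0 c) ?_
          simp only [Nat.add_sub_cancel] at hh2 hh3 hh4 hh5 ⊢
          linear_combination (X:Polynomial ℚ)^(0) * hh2 - (X:Polynomial ℚ)^(0) * hh3 + (X:Polynomial ℚ)^((A+1)) * hh4 - (X:Polynomial ℚ)^((A+1)+1) * hh5 + (X:Polynomial ℚ)^((A+1)+0) * hh6 - (X:Polynomial ℚ)^((A+1)+0) * hh7 - (X:Polynomial ℚ)^(0) * hh0 + (X:Polynomial ℚ)^(0) * hh1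
        · have hh0 := MB0 (A+1) (B+1) c (by omega)
          have hh1 := MB1 (A+1) (B+1) c
          have hh2 := MB2 (A+1) (B+1) c
          have hh3 := MB3 (A+1) (B+1) c (by omega)
          have hh4 := MB4 (A+1) (B+1) c
          have hh5 := MB5 (A+1) (B+1) c
          have hh6 := MB6 (A+1) (B+1) c
          have hh7 := MB7 (A+1) (B+1) c
          refine mul_right_cancel₀ (Wne (A+1) (B+1) c) ?_
          simp only [Nat.add_sub_cancel] at hh2 hh3 hh4 hh5 ⊢
          linear_combination (X:Polynomial ℚ)^(0) * hh2 - (X:Polynomial ℚ)^(0) * hh3 + (X:Polynomial ℚ)^((A+1)) * hh4 - (X:Polynomial ℚ)^((A+1)+1) * hh5 + (X:Polynomial ℚ)^((A+1)+(B+1)) * hh6 - (X:Polynomial ℚ)^((A+1)+(B+1)) * hh7 - (X:Polynomial ℚ)^(0) * hh0 + (X:Polynomial ℚ)^(0) * hh1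
    · simp only [Fml, Gexp, dlt, q1, q2, q3, q4, q5, q6, q7, q8, q9, q10, q11, q12, if_true, if_false, and_true, true_and, and_false, false_and, mul_one, mul_zero, add_zero, zero_add, pow_zero, one_mul]
      rcases a with _ | A
      · obtain rfl : b = 0 := by omega
        obtain ⟨C, rfl⟩ : ∃ C, c = C + 1 := ⟨c-1, by omega⟩
        simp [RMq, Mq_zero]
        try ring
      · rcases b with _ | B
        · have hh0 := MB0 (A+1) 0 c (by omega)
          have hh1 := MB1 (A+1) 0 c
          have hh2 := MB2 (A+1) 0 c
          have hh3 := MB3 (A+1) 0 c (by omega)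
          have hh4 := MB4 (A+1) 0 c
          have hh5 := MB5 (A+1) 0 c
          have hh6 := MB6 (A+1) 0 c
          have hh7 := MB7 (A+1) 0 c
          refine mul_right_cancel₀ (Wne (A+1) 0 c) ?_
          simp only [Nat.add_sub_cancel] at hh2 hh3 hh4 hh5 ⊢
          linear_combination (X:Polynomial ℚ)^((A+1)+0+c) * hh2 - (X:Polynomial ℚ)^((A+1)+0+c) * hh3 + (X:Polynomial ℚ)^((A+1)+(A+1)+0+c) * hh4 - (X:Polynomial ℚ)^((A+1)+(A+1)+0+c+1) * hh5 + (X:Polynomial ℚ)^((A+1)+0) * hh6 - (X:Polynomial ℚ)^((A+1)+0) * hh7 - (X:Polynomial ℚ)^((A+1)+0) * hh0 + (X:Polynomial ℚ)^((A+1)+0) * hh1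
        · have hh0 := MB0 (A+1) (B+1) c (by omega)
          have hh1 := MB1 (A+1) (B+1) c
          have hh2 := MB2 (A+1) (B+1) c
          have hh3 := MB3 (A+1) (B+1) c (by omega)
          have hh4 := MB4 (A+1) (B+1) c
          have hh5 := MB5 (A+1) (B+1) c
          have hh6 := MB6 (A+1) (B+1) c
          have hh7 := MB7 (A+1) (B+1) c
          refine mul_right_cancel₀ (Wne (A+1) (B+1) c) ?_
          simp only [Nat.add_sub_cancel] at hh2 hh3 hh4 hh5 ⊢
          linear_combination (X:Polynomial ℚ)^((A+1)+(B+1)+c) * hh2 - (X:Polynomial ℚ)^((A+1)+(B+1)+c) * hh3 + (X:Polynomial ℚ)^((A+1)+(A+1)+(B+1)+c) * hh4 - (X:Polynomial ℚ)^((A+1)+(A+1)+(B+1)+c+1) * hh5 + (X:Polynomial ℚ)^((A+1)+(B+1)) * hh6 - (X:Polynomial ℚ)^((A+1)+(B+1)) * hh7 - (X:Polynomial ℚ)^((A+1)+(B+1)) * hh0 + (X:Polynomial ℚ)^((A+1)+(B+1)) * hh1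
    · simp only [Fml, Gexp, dlt, q1, q2, q3, q4, q5, q6, q7, q8, q9, q10, q11, q12, if_true, if_false, and_true, true_and, and_false, false_and, mul_one, mul_zero, add_zero, zero_add, pow_zero, one_mul]
      rcases a with _ | A
      · obtain rfl : b = 0 := by omega
        obtain ⟨C, rfl⟩ : ∃ C, c = C + 1 := ⟨c-1, by omega⟩
        simp [RMq, Mq_zero]
        try ring
      · rcases b with _ | B
        · have hh0 := MB0 (A+1) 0 c (by omega)
          have hh1 := MB1 (A+1) 0 c
          have hh2 := MB2 (A+1) 0 c
          have hh3 := MB3 (A+1) 0 c (by omega)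
          have hh4 := MB4 (A+1) 0 c
          have hh5 := MB5 (A+1) 0 c
          have hh6 := MB6 (A+1) 0 c
          have hh7 := MB7 (A+1) 0 c
          refine mul_right_cancel₀ (Wne (A+1) 0 c) ?_
          simp only [Nat.add_sub_cancel] at hh2 hh3 hh4 hh5 ⊢
          linear_combination (X:Polynomial ℚ)^((A+1)+0+c) * hh2 - (X:Polynomial ℚ)^((A+1)+0+c) * hh3 + (X:Polynomial ℚ)^((A+1)) * hh4 - (X:Polynomial ℚ)^((A+1)+1) * hh5 + (X:Polynomial ℚ)^((A+1)+0) * hh6 - (X:Polynomial ℚ)^((A+1)+0) * hh7 - (X:Polynomial ℚ)^((A+1)) * hh0 + (X:Polynomial ℚ)^((A+1)+1) * hh1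
        · have hh0 := MB0 (A+1) (B+1) c (by omega)
          have hh1 := MB1 (A+1) (B+1) c
          have hh2 := MB2 (A+1) (B+1) c
          have hh3 := MB3 (A+1) (B+1) c (by omega)
          have hh4 := MB4 (A+1) (B+1) c
          have hh5 := MB5 (A+1) (B+1) c
          have hh6 := MB6 (A+1) (B+1) c
          have hh7 := MB7 (A+1) (B+1) c
          refine mul_right_cancel₀ (Wne (A+1) (B+1) c) ?_
          simp only [Nat.add_sub_cancel] at hh2 hh3 hh4 hh5 ⊢
          linear_combination (X:Polynomial ℚ)^((A+1)+(B+1)+c) * hh2 - (X:Polynomial ℚ)^((A+1)+(B+1)+c) * hh3 + (X:Polynomial ℚ)^((A+1)) * hh4 - (X:Polynomial ℚ)^((A+1)+1) * hh5 + (X:Polynomial ℚ)^((A+1)+(B+1)) * hh6 - (X:Polynomial ℚ)^((A+1)+(B+1)) * hh7 - (X:Polynomial ℚ)^((A+1)) * hh0 + (X:Polynomial ℚ)^((A+1)+1) * hh1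
  · exact absurd h1 hDN
  · rcases Nat.lt_trichotomy (rank D) (rank E) with h2 | h2 | h2
    · -- NDE
      have q1 : (rank Step.E < rank Step.E) = False := eq_false (by omega)
      have q2 : (rank Step.E < rank Step.N) = False := eq_false (by omega)
      have q3 : (rank Step.E < rank Step.D) = False := eq_false (by omega)
      have q4 : (rank Step.N < rank Step.E) = True := eq_true (by omega)
      have q5 : (rank Step.N < rank Step.N) = False := eq_false (by omega)
      have q6 : (rank Step.N < rank Step.D) = True := eq_true (by omega)
      have q7 : (rank Step.D < rank Step.E) = True := eq_true (by omega)
      have q8 : (rank Step.D < rank Step.N) = False := eq_false (by omega)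
      have q9 : (rank Step.D < rank Step.D) = False := eq_false (by omega)
      have q10 : (rank Step.N ≤ rank Step.E) = True := eq_true (by omega)
      have q11 : (rank Step.N ≤ rank Step.N) = True := eq_true (by omega)
      have q12 : (rank Step.N ≤ rank Step.D) = True := eq_true (by omega)
      rcases x with _ | _ | _
      · simp only [Fml, Gexp, dlt, q1, q2, q3, q4, q5, q6, q7, q8, q9, q10, q11, q12, if_true, if_false, and_true, true_and, and_false, false_and, mul_one, mul_zero, add_zero, zero_add, pow_zero, one_mul]
        rcases a with _ | A
        · obtain rfl : b = 0 := by omega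
          obtain ⟨C, rfl⟩ : ∃ C, c = C + 1 := ⟨c-1, by omega⟩
          simp [RMq, Mq_zero]
          try ring
        · rcases b with _ | B
          · have hh0 := MB0 (A+1) 0 c (by omega)
            have hh1 := MB1 (A+1) 0 c
            have hh2 := MB2 (A+1) 0 c
            have hh3 := MB3 (A+1) 0 c (by omega)
            have hh4 := MB4 (A+1) 0 c
            have hh5 := MB5 (A+1) 0 c
            have hh6 := MB6 (A+1) 0 c
            have hh7 := MB7 (A+1) 0 c
            refine mul_right_cancel₀ (Wne (A+1) 0 c) ?_
            simp only [Nat.add_sub_cancel] at hh2 hh3 hh4 hh5 ⊢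
            linear_combination (X:Polynomial ℚ)^(0) * hh2 - (X:Polynomial ℚ)^(0) * hh3 + (X:Polynomial ℚ)^((A+1)+c) * hh4 - (X:Polynomial ℚ)^((A+1)+c+1) * hh5 + (X:Polynomial ℚ)^((A+1)) * hh6 - (X:Polynomial ℚ)^((A+1)+1) * hh7 - (X:Polynomial ℚ)^(0) * hh0 + (X:Polynomial ℚ)^(0) * hh1
          · have hh0 := MB0 (A+1) (B+1) c (by omega)
            have hh1 := MB1 (A+1) (B+1) c
            have hh2 := MB2 (A+1) (B+1) c
            have hh3 := MB3 (A+1) (B+1) c (by omega)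
            have hh4 := MB4 (A+1) (B+1) c
            have hh5 := MB5 (A+1) (B+1) c
            have hh6 := MB6 (A+1) (B+1) c
            have hh7 := MB7 (A+1) (B+1) c
            refine mul_right_cancel₀ (Wne (A+1) (B+1) c) ?_
            simp only [Nat.add_sub_cancel] at hh2 hh3 hh4 hh5 ⊢
            linear_combination (X:Polynomial ℚ)^(0) * hh2 - (X:Polynomial ℚ)^(0) * hh3 + (X:Polynomial ℚ)^((A+1)+c) * hh4 - (X:Polynomial ℚ)^((A+1)+c+1) * hh5 + (X:Polynomial ℚ)^((A+1)) * hh6 - (X:Polynomial ℚ)^((A+1)+1) * hh7 - (X:Polynomial ℚ)^(0) * hh0 + (X:Polynomial ℚ)^(0) * hh1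
      · simp only [Fml, Gexp, dlt, q1, q2, q3, q4, q5, q6, q7, q8, q9, q10, q11, q12, if_true, if_false, and_true, true_and, and_false, false_and, mul_one, mul_zero, add_zero, zero_add, pow_zero, one_mul]
        rcases a with _ | A
        · obtain rfl : b = 0 := by omega
          obtain ⟨C, rfl⟩ : ∃ C, c = C + 1 := ⟨c-1, by omega⟩
          simp [RMq, Mq_zero]
          try ring
        · rcases b with _ | B
          · have hh0 := MB0 (A+1) 0 c (by omega)
            have hh1 := MB1 (A+1) 0 c
            have hh2 := MB2 (A+1) 0 c
            have hh3 := MB3 (A+1) 0 c (by omega)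
            have hh4 := MB4 (A+1) 0 c
            have hh5 := MB5 (A+1) 0 c
            have hh6 := MB6 (A+1) 0 c
            have hh7 := MB7 (A+1) 0 c
            refine mul_right_cancel₀ (Wne (A+1) 0 c) ?_
            simp only [Nat.add_sub_cancel] at hh2 hh3 hh4 hh5 ⊢
            linear_combination (X:Polynomial ℚ)^((A+1)+0+c) * hh2 - (X:Polynomial ℚ)^((A+1)+0+c) * hh3 + (X:Polynomial ℚ)^((A+1)+c) * hh4 - (X:Polynomial ℚ)^((A+1)+c+1) * hh5 + (X:Polynomial ℚ)^((A+1)) * hh6 - (X:Polynomial ℚ)^((A+1)+1) * hh7 - (X:Polynomial ℚ)^((A+1)) * hh0 + (X:Polynomial ℚ)^((A+1)+1) * hh1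
          · have hh0 := MB0 (A+1) (B+1) c (by omega)
            have hh1 := MB1 (A+1) (B+1) c
            have hh2 := MB2 (A+1) (B+1) c
            have hh3 := MB3 (A+1) (B+1) c (by omega)
            have hh4 := MB4 (A+1) (B+1) c
            have hh5 := MB5 (A+1) (B+1) c
            have hh6 := MB6 (A+1) (B+1) c
            have hh7 := MB7 (A+1) (B+1) c
            refine mul_right_cancel₀ (Wne (A+1) (B+1) c) ?_
            simp only [Nat.add_sub_cancel] at hh2 hh3 hh4 hh5 ⊢
            linear_combination (X:Polynomial ℚ)^((A+1)+(B+1)+c) * hh2 - (X:Polynomial ℚ)^((A+1)+(B+1)+c) * hh3 + (X:Polynomial ℚ)^((A+1)+c) * hh4 - (X:Polynomial ℚ)^((A+1)+c+1) * hh5 + (X:Polynomial ℚ)^((A+1)) * hh6 - (X:Polynomial ℚ)^((A+1)+1) * hh7 - (X:Polynomial ℚ)^((A+1)) * hh0 + (X:Polynomial ℚ)^((A+1)+1) * hh1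
      · simp only [Fml, Gexp, dlt, q1, q2, q3, q4, q5, q6, q7, q8, q9, q10, q11, q12, if_true, if_false, and_true, true_and, and_false, false_and, mul_one, mul_zero, add_zero, zero_add, pow_zero, one_mul]
        rcases a with _ | A
        · obtain rfl : b = 0 := by omega
          obtain ⟨C, rfl⟩ : ∃ C, c = C + 1 := ⟨c-1, by omega⟩
          simp [RMq, Mq_zero]
          try ring
        · rcases b with _ | B
          · have hh0 := MB0 (A+1) 0 c (by omega)
            have hh1 := MB1 (A+1) 0 c
            have hh2 := MB2 (A+1) 0 c
            have hh3 := MB3 (A+1) 0 c (by omega)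
            have hh4 := MB4 (A+1) 0 c
            have hh5 := MB5 (A+1) 0 c
            have hh6 := MB6 (A+1) 0 c
            have hh7 := MB7 (A+1) 0 c
            refine mul_right_cancel₀ (Wne (A+1) 0 c) ?_
            simp only [Nat.add_sub_cancel] at hh2 hh3 hh4 hh5 ⊢
            linear_combination (X:Polynomial ℚ)^((A+1)+0+c) * hh2 - (X:Polynomial ℚ)^((A+1)+0+c) * hh3 + (X:Polynomial ℚ)^((A+1)+c) * hh4 - (X:Polynomial ℚ)^((A+1)+c+1) * hh5 + (X:Polynomial ℚ)^((A+1)+(A+1)+0+c) * hh6 - (X:Polynomial ℚ)^((A+1)+(A+1)+0+c+1) * hh7 - (X:Polynomial ℚ)^((A+1)+c) * hh0 + (X:Polynomial ℚ)^((A+1)+c+1) * hh1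
          · have hh0 := MB0 (A+1) (B+1) c (by omega)
            have hh1 := MB1 (A+1) (B+1) c
            have hh2 := MB2 (A+1) (B+1) c
            have hh3 := MB3 (A+1) (B+1) c (by omega)
            have hh4 := MB4 (A+1) (B+1) c
            have hh5 := MB5 (A+1) (B+1) c
            have hh6 := MB6 (A+1) (B+1) c
            have hh7 := MB7 (A+1) (B+1) c
            refine mul_right_cancel₀ (Wne (A+1) (B+1) c) ?_
            simp only [Nat.add_sub_cancel] at hh2 hh3 hh4 hh5 ⊢
            linear_combination (X:Polynomial ℚ)^((A+1)+(B+1)+c) * hh2 - (X:Polynomial ℚ)^((A+1)+(B+1)+c) * hh3 + (X:Polynomial ℚ)^((A+1)+c) * hh4 - (X:Polynomial ℚ)^((A+1)+c+1) * hh5 + (X:Polynomial ℚ)^((A+1)+(A+1)+(B+1)+c) * hh6 - (X:Polynomial ℚ)^((A+1)+(A+1)+(B+1)+c+1) * hh7 - (X:Polynomial ℚ)^((A+1)+c) * hh0 + (X:Polynomial ℚ)^((A+1)+c+1) * hh1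
    · exact absurd h2 hDE
    · -- NED
      have q1 : (rank Step.E < rank Step.E) = False := eq_false (by omega)
      have q2 : (rank Step.E < rank Step.N) = False := eq_false (by omega)
      have q3 : (rank Step.E < rank Step.D) = True := eq_true (by omega)
      have q4 : (rank Step.N < rank Step.E) = True := eq_true (by omega)
      have q5 : (rank Step.N < rank Step.N) = False := eq_false (by omega)
      have q6 : (rank Step.N < rank Step.D) = True := eq_true (by omega)
      have q7 : (rank Step.D < rank Step.E) = False := eq_false (by omega)
      have q8 : (rank Step.D < rank Step.N) = False := eq_false (by omega)
      have q9 : (rank Step.D < rank Step.D) = False := eq_false (by omega)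
      have q10 : (rank Step.N ≤ rank Step.E) = True := eq_true (by omega)
      have q11 : (rank Step.N ≤ rank Step.N) = True := eq_true (by omega)
      have q12 : (rank Step.N ≤ rank Step.D) = True := eq_true (by omega)
      rcases x with _ | _ | _
      · simp only [Fml, Gexp, dlt, q1, q2, q3, q4, q5, q6, q7, q8, q9, q10, q11, q12, if_true, if_false, and_true, true_and, and_false, false_and, mul_one, mul_zero, add_zero, zero_add, pow_zero, one_mul]
        rcases a with _ | A
        · obtain rfl : b = 0 := by omega
          obtain ⟨C, rfl⟩ : ∃ C, c = C + 1 := ⟨c-1, by omega⟩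
          simp [RMq, Mq_zero]
          try ring
        · rcases b with _ | B
          · have hh0 := MB0 (A+1) 0 c (by omega)
            have hh1 := MB1 (A+1) 0 c
            have hh2 := MB2 (A+1) 0 c
            have hh3 := MB3 (A+1) 0 c (by omega)
            have hh4 := MB4 (A+1) 0 c
            have hh5 := MB5 (A+1) 0 c
            have hh6 := MB6 (A+1) 0 c
            have hh7 := MB7 (A+1) 0 c
            refine mul_right_cancel₀ (Wne (A+1) 0 c) ?_
            simp only [Nat.add_sub_cancel] at hh2 hh3 hh4 hh5 ⊢
            linear_combination (X:Polynomial ℚ)^(c) * hh2 - (X:Polynomial ℚ)^(c) * hh3 + (X:Polynomial ℚ)^((A+1)+c) * hh4 - (X:Polynomial ℚ)^((A+1)+c+1) * hh5 + (X:Polynomial ℚ)^((A+1)+0+c) * hh6 - (X:Polynomial ℚ)^((A+1)+0+c) * hh7 - (X:Polynomial ℚ)^(c) * hh0 + (X:Polynomial ℚ)^(c) * hh1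
          · have hh0 := MB0 (A+1) (B+1) c (by omega)
            have hh1 := MB1 (A+1) (B+1) c
            have hh2 := MB2 (A+1) (B+1) c
            have hh3 := MB3 (A+1) (B+1) c (by omega)
            have hh4 := MB4 (A+1) (B+1) c
            have hh5 := MB5 (A+1) (B+1) c
            have hh6 := MB6 (A+1) (B+1) c
            have hh7 := MB7 (A+1) (B+1) c
            refine mul_right_cancel₀ (Wne (A+1) (B+1) c) ?_
            simp only [Nat.add_sub_cancel] at hh2 hh3 hh4 hh5 ⊢
            linear_combination (X:Polynomial ℚ)^(c) * hh2 - (X:Polynomial ℚ)^(c) * hh3 + (X:Polynomial ℚ)^((A+1)+c) * hh4 - (X:Polynomial ℚ)^((A+1)+c+1) * hh5 + (X:Polynomial ℚ)^((A+1)+(B+1)+c) * hh6 - (X:Polynomial ℚ)^((A+1)+(B+1)+c) * hh7 - (X:Polynomial ℚ)^(c) * hh0 + (X:Polynomial ℚ)^(c) * hh1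
      · simp only [Fml, Gexp, dlt, q1, q2, q3, q4, q5, q6, q7, q8, q9, q10, q11, q12, if_true, if_false, and_true, true_and, and_false, false_and, mul_one, mul_zero, add_zero, zero_add, pow_zero, one_mul]
        rcases a with _ | A
        · obtain rfl : b = 0 := by omega
          obtain ⟨C, rfl⟩ : ∃ C, c = C + 1 := ⟨c-1, by omega⟩
          simp [RMq, Mq_zero]
          try ring
        · rcases b with _ | B
          · have hh0 := MB0 (A+1) 0 c (by omega)
            have hh1 := MB1 (A+1) 0 c
            have hh2 := MB2 (A+1) 0 c
            have hh3 := MB3 (A+1) 0 c (by omega)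
            have hh4 := MB4 (A+1) 0 c
            have hh5 := MB5 (A+1) 0 c
            have hh6 := MB6 (A+1) 0 c
            have hh7 := MB7 (A+1) 0 c
            refine mul_right_cancel₀ (Wne (A+1) 0 c) ?_
            simp only [Nat.add_sub_cancel] at hh2 hh3 hh4 hh5 ⊢
            linear_combination (X:Polynomial ℚ)^(c) * hh2 - (X:Polynomial ℚ)^(c) * hh3 + (X:Polynomial ℚ)^((A+1)+c) * hh4 - (X:Polynomial ℚ)^((A+1)+c+1) * hh5 + (X:Polynomial ℚ)^(0) * hh6 - (X:Polynomial ℚ)^(0) * hh7 - (X:Polynomial ℚ)^(0) * hh0 + (X:Polynomial ℚ)^(0) * hh1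
          · have hh0 := MB0 (A+1) (B+1) c (by omega)
            have hh1 := MB1 (A+1) (B+1) c
            have hh2 := MB2 (A+1) (B+1) c
            have hh3 := MB3 (A+1) (B+1) c (by omega)
            have hh4 := MB4 (A+1) (B+1) c
            have hh5 := MB5 (A+1) (B+1) c
            have hh6 := MB6 (A+1) (B+1) c
            have hh7 := MB7 (A+1) (B+1) c
            refine mul_right_cancel₀ (Wne (A+1) (B+1) c) ?_
            simp only [Nat.add_sub_cancel] at hh2 hh3 hh4 hh5 ⊢
            linear_combination (X:Polynomial ℚ)^(c) * hh2 - (X:Polynomial ℚ)^(c) * hh3 + (X:Polynomial ℚ)^((A+1)+c) * hh4 - (X:Polynomial ℚ)^((A+1)+c+1) * hh5 + (X:Polynomial ℚ)^(0) * hh6 - (X:Polynomial ℚ)^(0) * hh7 - (X:Polynomial ℚ)^(0) * hh0 + (X:Polynomial ℚ)^(0) * hh1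
      · simp only [Fml, Gexp, dlt, q1, q2, q3, q4, q5, q6, q7, q8, q9, q10, q11, q12, if_true, if_false, and_true, true_and, and_false, false_and, mul_one, mul_zero, add_zero, zero_add, pow_zero, one_mul]
        rcases a with _ | A
        · obtain rfl : b = 0 := by omega
          obtain ⟨C, rfl⟩ : ∃ C, c = C + 1 := ⟨c-1, by omega⟩
          simp [RMq, Mq_zero]
          try ring
        · rcases b with _ | B
          · have hh0 := MB0 (A+1) 0 c (by omega)
            have hh1 := MB1 (A+1) 0 c
            have hh2 := MB2 (A+1) 0 c
            have hh3 := MB3 (A+1) 0 c (by omega)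
            have hh4 := MB4 (A+1) 0 c
            have hh5 := MB5 (A+1) 0 c
            have hh6 := MB6 (A+1) 0 c
            have hh7 := MB7 (A+1) 0 c
            refine mul_right_cancel₀ (Wne (A+1) 0 c) ?_
            simp only [Nat.add_sub_cancel] at hh2 hh3 hh4 hh5 ⊢
            linear_combination (X:Polynomial ℚ)^((A+1)+0+c+c) * hh2 - (X:Polynomial ℚ)^((A+1)+0+c+c) * hh3 + (X:Polynomial ℚ)^((A+1)+c) * hh4 - (X:Polynomial ℚ)^((A+1)+c+1) * hh5 + (X:Polynomial ℚ)^((A+1)+0+c) * hh6 - (X:Polynomial ℚ)^((A+1)+0+c) * hh7 - (X:Polynomial ℚ)^((A+1)+c) * hh0 + (X:Polynomial ℚ)^((A+1)+c+1) * hh1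
          · have hh0 := MB0 (A+1) (B+1) c (by omega)
            have hh1 := MB1 (A+1) (B+1) c
            have hh2 := MB2 (A+1) (B+1) c
            have hh3 := MB3 (A+1) (B+1) c (by omega)
            have hh4 := MB4 (A+1) (B+1) c
            have hh5 := MB5 (A+1) (B+1) c
            have hh6 := MB6 (A+1) (B+1) c
            have hh7 := MB7 (A+1) (B+1) c
            refine mul_right_cancel₀ (Wne (A+1) (B+1) c) ?_
            simp only [Nat.add_sub_cancel] at hh2 hh3 hh4 hh5 ⊢
            linear_combination (X:Polynomial ℚ)^((A+1)+(B+1)+c+c) * hh2 - (X:Polynomial ℚ)^((A+1)+(B+1)+c+c) * hh3 + (X:Polynomial ℚ)^((A+1)+c) * hh4 - (X:Polynomial ℚ)^((A+1)+c+1) * hh5 + (X:Polynomial ℚ)^((A+1)+(B+1)+c) * hh6 - (X:Polynomial ℚ)^((A+1)+(B+1)+c) * hh7 - (X:Polynomial ℚ)^((A+1)+c) * hh0 + (X:Polynomial ℚ)^((A+1)+c+1) * hh1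

def GSet (a b c : ℕ) : Finset (List Step) :=
  (Words (a+b+c)).filter fun w => w.count E = a ∧ w.count N = b ∧ w.count D = c ∧ ¬ bad w

noncomputable def Srf (rank : Step → ℕ) (a b c : ℕ) (x : Step) : Polynomial ℚ :=
  ∑ w ∈ (GSet a b c).filter (fun w => w.getLast? = some x), X ^ maj rank w

lemma mem_Words {l : ℕ} {w : List Step} : w ∈ Words l ↔ w.length = l := by
  unfold Words
  simp only [Finset.mem_image, Finset.mem_univ, true_and]
  constructor
  · rintro ⟨f, rfl⟩; simp
  · intro h; subst h; exact ⟨w.get, List.ofFn_get w⟩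

lemma count_sum (w : List Step) : w.count E + w.count N + w.count D = w.length := by
  induction w with
  | nil => rfl
  | cons x t ih => rcases x <;> simp [List.count_cons] <;> omega

lemma not_bad_iff {w : List Step} :
    (¬ bad w = true) ↔ ∀ k, (w.take k).count N ≤ (w.take k).count E := by
  simp only [bad, List.any_eq_true, List.mem_range, not_exists, not_and, decide_eq_true_eq, not_lt]
  constructor
  · intro h k
    by_cases hk : k ≤ w.length
    · exact h k (by omega)
    · rw [List.take_of_length_le (by omega)]
      have := h w.length (by omega)
      rwa [List.take_length] at this
  · intro h k _; exact h k

lemma count_singleton' (z x : Step) : List.count z [x] = if x = z then 1 else 0 := by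
  rcases z <;> rcases x <;> simp

lemma take_concat_le {α : Type*} (u : List α) (x : α) {k : ℕ} (h : k ≤ u.length) :
    (u ++ [x]).take k = u.take k := List.take_append_of_le_length h

lemma not_bad_concat {u : List Step} {x : Step} :
    (¬ bad (u ++ [x]) = true) ↔
      (¬ bad u = true) ∧ (u ++ [x]).count N ≤ (u ++ [x]).count E := by
  rw [not_bad_iff, not_bad_iff]
  constructor
  · intro h
    refine ⟨fun k => ?_, ?_⟩
    · by_cases hk : k ≤ u.length
      · have := h k; rwa [take_concat_le u x hk] at this
      · rw [List.take_of_length_le (by omega)]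
        have := h u.length; rwa [take_concat_le u x le_rfl, List.take_length] at this
    · have := h (u.length + 1)
      rwa [List.take_of_length_le (by simp)] at this
  · rintro ⟨h1, h2⟩ k
    by_cases hk : k ≤ u.length
    · rw [take_concat_le u x hk]; exact h1 k
    · rw [List.take_of_length_le (by simp; omega)]; exact h2


lemma maj_nil (rank : Step → ℕ) : maj rank [] = 0 := rfl

lemma maj_single (rank : Step → ℕ) (x : Step) : maj rank [x] = 0 := rfl

lemma maj_concat (rank : Step → ℕ) (u : List Step) (x : Step) (h : u ≠ []) :
    maj rank (u ++ [x]) =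
      maj rank u + (if rank x < rank (u.getLast h) then u.length else 0) := by
  obtain ⟨n, hn⟩ : ∃ n, u.length = n + 1 := ⟨u.length - 1, by
    have := List.length_pos_iff.2 h; omega⟩
  unfold maj
  have hlen : (u ++ [x]).length - 1 = n + 1 := by simp [hn]
  rw [hlen, hn, Nat.add_sub_cancel, Finset.sum_range_succ]
  congr 1
  · apply Finset.sum_congr rfl
    intro i hi
    have hi' : i < n := Finset.mem_range.1 hi
    rw [List.getD_append _ _ _ _ (by omega), List.getD_append _ _ _ _ (by omega)]
  · have h1 : (u ++ [x]).getD n E = u.getLast h := by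
      rw [List.getD_append _ _ _ _ (by omega)]
      rw [List.getLast_eq_getElem, List.getD_eq_getElem _ _ (by omega)]
      congr 1; omega
    have h2 : (u ++ [x]).getD (n + 1) E = x := by
      rw [List.getD_append_right _ _ _ _ (by omega)]
      simp [hn]
    rw [h1, h2]


def cntE : Step → ℕ | E => 1 | _ => 0
def cntN : Step → ℕ | N => 1 | _ => 0
def cntD : Step → ℕ | D => 1 | _ => 0

lemma count_concat (z : Step) (u : List Step) (x : Step) :
    (u ++ [x]).count z = u.count z + (if x = z then 1 else 0) := by
  rw [List.count_append, count_singleton']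

lemma cnt_sum (x : Step) : cntE x + cntN x + cntD x = 1 := by rcases x <;> rfl

lemma mem_GSet {a b c : ℕ} {w : List Step} :
    w ∈ GSet a b c ↔ w.length = a+b+c ∧ w.count E = a ∧ w.count N = b ∧ w.count D = c ∧
      ¬ bad w = true := by
  rw [GSet, Finset.mem_filter, mem_Words]

lemma Srf_rec (rank : Step → ℕ) (a b c : ℕ) (x : Step)
    (hgood : b + cntN x ≤ a + cntE x) :
    Srf rank (a + cntE x) (b + cntN x) (c + cntD x) x =
      (if a + b + c = 0 then 1 else 0) +
        ∑ y : Step, X ^ ((a+b+c) * (if rank x < rank y then 1 else 0)) * Srf rank a b c y := by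
  have hstep1 : Srf rank (a + cntE x) (b + cntN x) (c + cntD x) x =
      ∑ u ∈ GSet a b c, X ^ maj rank (u ++ [x]) := by
    rw [Srf]
    apply Finset.sum_nbij' (i := fun w => w.dropLast) (j := fun u => u ++ [x])
    · intro w hw
      rw [Finset.mem_filter] at hw
      obtain ⟨hw1, hw2⟩ := hw
      obtain ⟨u, rfl⟩ := List.getLast?_eq_some_iff.1 hw2
      rw [List.dropLast_concat]
      rw [mem_GSet] at hw1 ⊢
      obtain ⟨hl, hE, hN, hD, hb⟩ := hw1
      rw [count_concat] at hE hN hD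
      have hb' := (not_bad_concat.1 hb).1
      simp only [List.length_append, List.length_singleton] at hl
      refine ⟨?_, ?_, ?_, ?_, hb'⟩ <;>
        rcases x <;> simp [cntE, cntN, cntD] at hl hE hN hD ⊢ <;> try omega
    · intro u hu
      rw [Finset.mem_filter]
      rw [mem_GSet] at hu ⊢
      obtain ⟨hl, hE, hN, hD, hb⟩ := hu
      constructor
      · have hbb : ¬ bad (u ++ [x]) = true := by
          rw [not_bad_concat]
          refine ⟨hb, ?_⟩
          rw [count_concat, count_concat]
          rcases x <;> simp [cntE, cntN] at hgood ⊢ <;> try omega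
        refine ⟨?_, ?_, ?_, ?_, hbb⟩ <;>
          simp only [List.length_append, List.length_singleton, count_concat] <;>
          rcases x <;> simp [cntE, cntN, cntD] <;> try omega
      · exact List.getLast?_concat (l := u)
    · intro w hw
      rw [Finset.mem_filter] at hw
      obtain ⟨u, rfl⟩ := List.getLast?_eq_some_iff.1 hw.2
      rw [List.dropLast_concat]
    · intro u _; rw [List.dropLast_concat]
    · intro w hw
      rw [Finset.mem_filter] at hw
      obtain ⟨u, rfl⟩ := List.getLast?_eq_some_iff.1 hw.2
      rw [List.dropLast_concat]
  rw [hstep1]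
  rw [← Finset.sum_fiberwise (GSet a b c) (fun u => u.getLast?)
    (fun u => X ^ maj rank (u ++ [x]))]
  rw [Fintype.sum_option]
  congr 1
  · -- none fiber
    have hfe : (GSet a b c).filter (fun u => u.getLast? = none) =
        if a+b+c = 0 then {([] : List Step)} else ∅ := by
      ext u
      simp only [Finset.mem_filter, List.getLast?_eq_none_iff]
      constructor
      · rintro ⟨hu, rfl⟩
        rw [mem_GSet] at hu
        have : a+b+c = 0 := by simpa using hu.1.symm
        simp [this]
      · intro hu
        by_cases h0 : a+b+c = 0
        · rw [if_pos h0] at hu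
          simp at hu
          subst hu
          obtain ⟨rfl, rfl, rfl⟩ : a = 0 ∧ b = 0 ∧ c = 0 := by omega
          exact ⟨mem_GSet.2 (by simp [bad]), rfl⟩
        · rw [if_neg h0] at hu; simp at hu
    rw [hfe]
    by_cases h0 : a+b+c = 0
    · rw [if_pos h0, if_pos h0, Finset.sum_singleton]
      simp [maj_single]
    · rw [if_neg h0, if_neg h0, Finset.sum_empty]
  · -- some fibers
    apply Finset.sum_congr rfl
    intro y _
    rw [Srf, Finset.mul_sum]
    apply Finset.sum_congr rfl
    intro u hu
    rw [Finset.mem_filter] at hu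
    have hne : u ≠ [] := by
      intro h; subst h; simp at hu
    have hlast : u.getLast hne = y := by
      have := List.getLast?_eq_getLast (l := u) hne
      rw [hu.2] at this; exact (Option.some_injective _ this).symm
    rw [maj_concat rank u x hne, hlast]
    have hlen : u.length = a+b+c := by
      have := mem_GSet.1 hu.1; exact this.1
    rw [pow_add, hlen]
    by_cases hxy : rank x < rank y
    · rw [if_pos hxy, if_pos hxy]; ring
    · rw [if_neg hxy, if_neg hxy]; ring


lemma Srf_rec_E (rank : Step → ℕ) (a b c : ℕ) (hba : b ≤ a + 1) :
    Srf rank (a+1) b c E = (if a+b+c = 0 then 1 else 0) +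
      ∑ y : Step, X ^ ((a+b+c) * (if rank E < rank y then 1 else 0)) * Srf rank a b c y := by
  have h := Srf_rec rank a b c E (by simp [cntE, cntN]; omega)
  simpa [cntE, cntN, cntD] using h

lemma Srf_rec_N (rank : Step → ℕ) (a b c : ℕ) (hba : b + 1 ≤ a) :
    Srf rank a (b+1) c N = (if a+b+c = 0 then 1 else 0) +
      ∑ y : Step, X ^ ((a+b+c) * (if rank N < rank y then 1 else 0)) * Srf rank a b c y := by
  have h := Srf_rec rank a b c N (by simp [cntE, cntN]; omega)
  simpa [cntE, cntN, cntD] using h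

lemma Srf_rec_D (rank : Step → ℕ) (a b c : ℕ) (hba : b ≤ a) :
    Srf rank a b (c+1) D = (if a+b+c = 0 then 1 else 0) +
      ∑ y : Step, X ^ ((a+b+c) * (if rank D < rank y then 1 else 0)) * Srf rank a b c y := by
  have h := Srf_rec rank a b c D (by simp [cntE, cntN]; omega)
  simpa [cntE, cntN, cntD] using h

lemma Srf_empty_of_lt (rank : Step → ℕ) {a b c : ℕ} (h : a < b) (y : Step) :
    Srf rank a b c y = 0 := by
  rw [Srf]
  have hemp : GSet a b c = ∅ := by
    apply Finset.eq_empty_of_forall_notMem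
    intro w hw
    rw [mem_GSet] at hw
    obtain ⟨hl, hE, hN, hD, hb⟩ := hw
    have hk := not_bad_iff.1 hb w.length
    rw [List.take_length] at hk
    omega
  rw [hemp]; simp

lemma Srf_no_last (rank : Step → ℕ) (a b c : ℕ) (x : Step)
    (h : ∀ w ∈ GSet a b c, List.count x w = 0) : Srf rank a b c x = 0 := by
  rw [Srf, Finset.filter_false_of_mem, Finset.sum_empty]
  intro w hw hlast
  obtain ⟨u, rfl⟩ := List.getLast?_eq_some_iff.1 hlast
  have hx : x ∈ u ++ [x] := by simp
  exact absurd hx (List.count_eq_zero.1 (h _ hw))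

lemma Srf_zero_zero (rank : Step → ℕ) (y : Step) : Srf rank 0 0 0 y = 0 := by
  apply Srf_no_last
  intro w hw
  have hl := (mem_GSet.1 hw).1
  have hwnil : w = [] := List.length_eq_zero_iff.1 (by simpa using hl)
  subst hwnil; rcases y <;> rfl

lemma Srf_eq_Fml (rank : Step → ℕ) (hinj : Function.Injective rank) (hNE : rank N < rank E) :
    ∀ L a b c, a + b + c = L → b ≤ a → ∀ x, Srf rank a b c x = Fml rank a b c x := by
  intro L
  induction L using Nat.strong_induction_on with
  | _ L IH =>
    intro a b c hL hba x
    have hdltE : dlt rank E = 0 := by simp [dlt]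
    rcases x with _ | _ | _
    · -- x = E
      rcases a with _ | A
      · obtain rfl : b = 0 := by omega
        rw [show Fml rank 0 0 c E = 0 from by simp [Fml]]
        apply Srf_no_last
        intro w hw
        exact (mem_GSet.1 hw).2.1
      · rw [Srf_rec_E rank A b c (by omega)]
        by_cases hdeg : b = A + 1
        · subst hdeg
          have hz : ∀ y, Srf rank A (A+1) c y = 0 :=
            fun y => Srf_empty_of_lt rank (by omega) y
          simp only [hz, mul_zero, Finset.sum_const_zero, add_zero]
          rw [if_neg (by omega)]
          simp only [Fml, if_pos (show 1 ≤ A+1 by omega), Nat.add_sub_cancel, hdltE,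
            pow_zero, one_mul]
          rw [show RMq A (A+1) c = Mq (A+1) A c from by simp [RMq]]
          rw [Mq_swap A (A+1) c]
          ring
        · have hba' : b ≤ A := by omega
          by_cases hz : A + b + c = 0
          · obtain ⟨rfl, rfl, rfl⟩ : A = 0 ∧ b = 0 ∧ c = 0 := by omega
            rw [if_pos rfl]
            simp only [Srf_zero_zero, mul_zero, Finset.sum_const_zero, add_zero]
            simp [Fml, Gexp, hdltE, Mq_zero, RMq]
          · rw [if_neg hz, zero_add]
            rw [Finset.sum_congr rfl (fun y _ => by
              rw [IH (A+b+c) (by omega) A b c rfl hba' y])]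
            rw [AlgCore rank hinj hNE A b c hba' (by omega) E]
            simp [Fml]
    · -- x = D
      rcases c with _ | C
      · rw [show Fml rank a b 0 D = 0 from by simp [Fml]]
        apply Srf_no_last
        intro w hw
        exact (mem_GSet.1 hw).2.2.2.1
      · rw [Srf_rec_D rank a b C hba]
        by_cases hz : a + b + C = 0
        · obtain ⟨rfl, rfl, rfl⟩ : a = 0 ∧ b = 0 ∧ C = 0 := by omega
          rw [if_pos rfl]
          simp only [Srf_zero_zero, mul_zero, Finset.sum_const_zero, add_zero]
          simp [Fml, Gexp, Mq_zero, RMq]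
        · rw [if_neg hz, zero_add]
          rw [Finset.sum_congr rfl (fun y _ => by
            rw [IH (a+b+C) (by omega) a b C rfl hba y])]
          rw [AlgCore rank hinj hNE a b C hba (by omega) D]
          simp [Fml]
    · -- x = N
      rcases b with _ | B
      · rw [show Fml rank a 0 c N = 0 from by simp [Fml]]
        apply Srf_no_last
        intro w hw
        exact (mem_GSet.1 hw).2.2.1
      · rw [Srf_rec_N rank a B c (by omega)]
        rw [if_neg (by omega), zero_add]
        rw [Finset.sum_congr rfl (fun y _ => by
          rw [IH (a+B+c) (by omega) a B c rfl (by omega) y])]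
        rw [AlgCore rank hinj hNE a B c (by omega) (by omega) N]
        simp [Fml]

lemma Sch_eq_GSet (n l : ℕ) (hnl : n ≤ l) (hl : l ≤ 2*n) :
    SchSet n l = GSet (l-n) (l-n) (2*n-l) := by
  ext w
  rw [SchSet, Finset.mem_filter, DelSet, Finset.mem_filter, mem_Words, mem_GSet]
  have hs := count_sum w
  constructor
  · rintro ⟨⟨hlen, hE, hN⟩, hb⟩
    refine ⟨by omega, by omega, by omega, by omega, hb⟩
  · rintro ⟨hlen, hE, hN, hD, hb⟩
    refine ⟨⟨by omega, by omega, by omega⟩, hb⟩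

lemma Sch_sum (rank : Step → ℕ) (hinj : Function.Injective rank) (hNE : rank N < rank E)
    (n l : ℕ) (hnl : n ≤ l) (hl : l ≤ 2*n) (h1 : 1 ≤ l) :
    (∑ w ∈ SchSet n l, (X:Polynomial ℚ) ^ maj rank w) =
      Mq (l-n) (l-n) (2*n-l) - RMq (l-n) (l-n) (2*n-l) := by
  rw [Sch_eq_GSet n l hnl hl]
  rw [← Finset.sum_fiberwise (GSet (l-n) (l-n) (2*n-l)) (fun u => u.getLast?)
    (fun w => X ^ maj rank w), Fintype.sum_option]
  have hnone : (GSet (l-n) (l-n) (2*n-l)).filter (fun u => u.getLast? = none) = ∅ := by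
    apply Finset.eq_empty_of_forall_notMem
    intro w hw
    rw [Finset.mem_filter, List.getLast?_eq_none_iff] at hw
    obtain ⟨hw1, rfl⟩ := hw
    have hlen := (mem_GSet.1 hw1).1
    simp at hlen
    omega
  rw [hnone, Finset.sum_empty, zero_add]
  have hfib : ∀ y : Step,
      (∑ w ∈ (GSet (l-n) (l-n) (2*n-l)).filter (fun u => u.getLast? = some y),
        (X:Polynomial ℚ) ^ maj rank w) = Fml rank (l-n) (l-n) (2*n-l) y := by
    intro y
    rw [show (∑ w ∈ (GSet (l-n) (l-n) (2*n-l)).filter (fun u => u.getLast? = some y),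
        (X:Polynomial ℚ) ^ maj rank w) = Srf rank (l-n) (l-n) (2*n-l) y from rfl]
    exact Srf_eq_Fml rank hinj hNE _ _ _ _ rfl le_rfl y
  rw [Finset.sum_congr rfl (fun y _ => hfib y)]
  by_cases hED : rank E < rank D
  · have hcore := AlgCore rank hinj hNE (l-n) (l-n) (2*n-l) le_rfl (by omega) D
    have hmax : ∀ y : Step, ¬ rank D < rank y := by intro y; rcases y <;> omega
    have g1 : ¬ rank D < rank E := hmax E
    have g2 : ¬ rank D < rank N := hmax N
    have g3 : ¬ rank D < rank D := hmax D
    have hl2 : ∀ y : Step, X ^ ((l-n+(l-n)+(2*n-l)) * if rank D < rank y then 1 else 0) *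
        Fml rank (l-n) (l-n) (2*n-l) y = Fml rank (l-n) (l-n) (2*n-l) y :=
      fun y => by rw [if_neg (hmax y), Nat.mul_zero, pow_zero, one_mul]
    rw [Finset.sum_congr rfl (fun y _ => hl2 y)] at hcore
    have hg : Gexp rank (l-n) (l-n) (2*n-l) D = 0 := by simp [Gexp, g1, g2, g3]
    have hd : dlt rank D = 0 := by simp [dlt, g1]
    rw [hg, hd, pow_zero, one_mul, one_mul] at hcore
    exact hcore
  · have hcore := AlgCore rank hinj hNE (l-n) (l-n) (2*n-l) le_rfl (by omega) E
    have hmax : ∀ y : Step, ¬ rank E < rank y := by intro y; rcases y <;> omega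
    have g1 : ¬ rank E < rank E := hmax E
    have g2 : ¬ rank E < rank N := hmax N
    have g3 : ¬ rank E < rank D := hmax D
    have hl2 : ∀ y : Step, X ^ ((l-n+(l-n)+(2*n-l)) * if rank E < rank y then 1 else 0) *
        Fml rank (l-n) (l-n) (2*n-l) y = Fml rank (l-n) (l-n) (2*n-l) y :=
      fun y => by rw [if_neg (hmax y), Nat.mul_zero, pow_zero, one_mul]
    rw [Finset.sum_congr rfl (fun y _ => hl2 y)] at hcore
    have hg : Gexp rank (l-n) (l-n) (2*n-l) E = 0 := by simp [Gexp, g1, g2, g3]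
    have hd : dlt rank E = 0 := by simp [dlt, g1]
    rw [hg, hd, pow_zero, one_mul, one_mul] at hcore
    exact hcore

lemma final_id (m d : ℕ) :
    qint (m+1) * (Mq m m d - RMq m m d) = X^m * (qbinom (2*m) m * qbinom (2*m+d) d) := by
  rcases m with _ | M
  · simp [RMq, Mq_zero, qint, qbinom_diag, qbinom_zero]
  · rw [show RMq (M+1) (M+1) d = Mq (M+2) M d from by simp [RMq]]
    have h1 := Mq_fact (M+1) (M+1) d
    have h2 := Mq_fact (M+2) M d
    rw [show (M+1)+(M+1)+d = 2*(M+1)+d from by omega] at h1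
    rw [show (M+2)+M+d = 2*(M+1)+d from by omega] at h2
    have h3 := qbinom_mul (2*(M+1)) (M+1) (M+1) (by omega)
    have h4 := qbinom_mul (2*(M+1)+d) d (2*(M+1)) (by omega)
    have e1 : qfact (M+2) = qfact (M+1) * qint (M+2) := rfl
    have e2 : qfact (M+1) = qfact M * qint (M+1) := rfl
    have e6 : qint (M+2) = qint (M+1) + X^(M+1) := qint_succ (M+1)
    refine mul_right_cancel₀ (show qfact (M+2) * (qfact (M+1) * qfact d) ≠ 0 from
      mul_ne_zero (qfact_ne_zero _) (mul_ne_zero (qfact_ne_zero _) (qfact_ne_zero _))) ?_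
    linear_combination (qint (M+2)*qint (M+2)) * h1 - (qint (M+2)*qint (M+1)) * h2
      - (X^(M+1)*qint (M+2)*qbinom (2*(M+1)+d) d*qfact d) * h3 - (X^(M+1)*qint (M+2)) * h4
      + (qint (M+2)*(Mq (M+1) (M+1) d)*qfact (M+1)*qfact d
         - X^(M+1)*(qbinom (2*(M+1)) (M+1))*(qbinom (2*(M+1)+d) d)*qfact (M+1)*qfact d) * e1
      - (qint (M+2)*(Mq (M+2) M d)*qfact (M+2)*qfact d) * e2
      + (qfact (2*(M+1)+d)*qint (M+2)) * e6


/-- for any linear order with N < E, the maj generating function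
over Schröder n-paths with l steps is
(q^{l-n}/[l-n+1]) · qbinom(2(l-n), l-n) · qbinom(l, 2n-l)
(stated with the denominator [l-n+1] cleared). -/
theorem maj_schroeder_NltE (n l : ℕ) (hnl : n ≤ l) (hl : l ≤ 2 * n)
    (rank : Step → ℕ) (hrank : Function.Injective rank) (hNE : rank N < rank E) :
    qint (l - n + 1) * ∑ w ∈ SchSet n l, (X : Polynomial ℚ) ^ maj rank w =
      X ^ (l - n) * (qbinom (2 * (l - n)) (l - n) * qbinom l (2 * n - l)) := by
  rcases Nat.eq_zero_or_pos l with rfl | hpos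
  · obtain rfl : n = 0 := by omega
    have hsch : SchSet 0 0 = {([] : List Step)} := by
      ext w
      rw [SchSet, Finset.mem_filter, DelSet, Finset.mem_filter, mem_Words]
      constructor
      · rintro ⟨⟨hlen, _, _⟩, _⟩
        simp [List.length_eq_zero_iff.1 hlen]
      · intro hw
        simp at hw
        subst hw
        refine ⟨⟨rfl, by simp, by simp⟩, by decide⟩
    rw [hsch, Finset.sum_singleton]
    simp [maj_nil, qint, qbinom_zero]
  · rw [Sch_sum rank hrank hNE n l hnl hl hpos, final_id (l-n) (2*n-l),
      show 2*(l-n)+(2*n-l) = l from by omega]
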